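/- Let (A_1,...,A_d) be a commuting tuple of N×N complex matrices. A point λ = (λ_1,...,λ_d) ∈ ℂ^d is a joint eigenvalue of (A_1,...,A_d) if and only if det(α_1(A_1 − λ_1 I) + ... + α_d(A_d − λ_d I)) = 0 for all α = (α_1,...,α_d) ∈ ℂ^d. -/

import Mathlib

open Matrix

/-- Commuting nilpotent endomorphisms of a nontrivial module have a common kernel vector. -/
private lemma nil_aux (d : ℕ) : ∀ (V : Type) [AddCommGroup V] [Module ℂ V] [Nontrivial V]
    (B : Fin d → Module.End ℂ V), (∀ i j, Commute (B i) (B j)) →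
    (∀ j, IsNilpotent (B j)) → ∃ v : V, v ≠ 0 ∧ ∀ j, B j v = 0 := by
  induction d with
  | zero =>
    intro V _ _ _ B _ _
    obtain ⟨v, hv⟩ := exists_ne (0 : V)
    exact ⟨v, hv, fun j => j.elim0⟩
  | succ d ih =>
    intro V _ _ _ B hcomm hnil
    have hKnt : Nontrivial (LinearMap.ker (B 0)) := by
      rw [Submodule.nontrivial_iff_ne_bot]
      intro hbot
      have hinj : Function.Injective (B 0) := LinearMap.ker_eq_bot.mp hbot
      obtain ⟨n, hn⟩ := hnil 0
      have h2 : Function.Injective ((B 0) ^ n) := Module.End.iterate_injective hinj n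
      obtain ⟨v, hv⟩ := exists_ne (0 : V)
      exact hv (h2 (by simp [hn]))
    have hmaps : ∀ j, ∀ x ∈ LinearMap.ker (B 0), B j x ∈ LinearMap.ker (B 0) := by
      intro j x hx
      simp only [LinearMap.mem_ker] at hx ⊢
      have := congrArg (fun f : Module.End ℂ V => f x) (hcomm 0 j)
      simpa [Module.End.mul_apply, hx] using this
    obtain ⟨v, hv0, hvC⟩ := ih (LinearMap.ker (B 0))
      (fun j => (B j.succ).restrict (hmaps j.succ))
      (fun i j => LinearMap.restrict_commute (hcomm i.succ j.succ) _ _)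
      (fun j => by
        obtain ⟨n, hn⟩ := hnil j.succ
        refine ⟨n, ?_⟩
        rw [Module.End.pow_restrict]
        apply LinearMap.ext; intro x; apply Subtype.ext
        simp only [LinearMap.restrict_coe_apply, hn, LinearMap.zero_apply,
          ZeroMemClass.coe_zero])
    refine ⟨v.1, by simpa using hv0, fun j => ?_⟩
    refine Fin.cases ?_ ?_ j
    · exact v.2
    · intro i
      have := congrArg Subtype.val (hvC i)
      simpa [LinearMap.restrict_coe_apply] using this

/-- The determinant of `∑ αⱼ • Bⱼ` is a polynomial function of `α`. -/
private lemma exists_detPoly (d : ℕ) (V : Type) [AddCommGroup V] [Module ℂ V]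
    [FiniteDimensional ℂ V] (B : Fin d → Module.End ℂ V) :
    ∃ p : MvPolynomial (Fin d) ℂ, ∀ α : Fin d → ℂ,
      MvPolynomial.eval α p = LinearMap.det (∑ j, α j • B j) := by
  classical
  let b := Module.finBasis ℂ V
  refine ⟨(∑ j, (MvPolynomial.X j : MvPolynomial (Fin d) ℂ) •
      (LinearMap.toMatrix b b (B j)).map MvPolynomial.C).det, fun α => ?_⟩
  rw [← LinearMap.det_toMatrix b, RingHom.map_det]
  congr 1
  have h1 : LinearMap.toMatrix b b (∑ j, α j • B j)
      = ∑ j, α j • LinearMap.toMatrix b b (B j) := by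
    simp [map_sum]
  rw [h1]
  ext i k
  simp [Matrix.map_apply, Matrix.sum_apply, Matrix.smul_apply]

private lemma det_prodMap (M₁ M₂ : Type) [AddCommGroup M₁] [Module ℂ M₁] [FiniteDimensional ℂ M₁]
    [AddCommGroup M₂] [Module ℂ M₂] [FiniteDimensional ℂ M₂]
    (f : Module.End ℂ M₁) (g : Module.End ℂ M₂) :
    LinearMap.det (f.prodMap g) = LinearMap.det f * LinearMap.det g := by
  classical
  let b₁ := Module.finBasis ℂ M₁
  let b₂ := Module.finBasis ℂ M₂
  rw [← LinearMap.det_toMatrix (b₁.prod b₂), LinearMap.toMatrix_prodMap,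
    Matrix.det_fromBlocks_zero₂₁, LinearMap.det_toMatrix, LinearMap.det_toMatrix]

private lemma det_restrict (V : Type) [AddCommGroup V] [Module ℂ V] [FiniteDimensional ℂ V]
    (p q : Submodule ℂ V) (hpq : IsCompl p q) (f : Module.End ℂ V)
    (hp : ∀ x ∈ p, f x ∈ p) (hq : ∀ x ∈ q, f x ∈ q) :
    LinearMap.det f = LinearMap.det (f.restrict hp) * LinearMap.det (f.restrict hq) := by
  let e : (p × q) ≃ₗ[ℂ] V := Submodule.prodEquivOfIsCompl p q hpq
  have key : (e.symm : V →ₗ[ℂ] p × q) ∘ₗ f ∘ₗ (e : p × q →ₗ[ℂ] V) =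
      (f.restrict hp).prodMap (f.restrict hq) := by
    apply LinearMap.ext
    rintro ⟨x, y⟩
    apply e.injective
    rw [LinearMap.comp_apply, LinearMap.comp_apply, LinearEquiv.coe_coe, LinearEquiv.coe_coe,
      LinearEquiv.apply_symm_apply]
    have h1 : e ((f.restrict hp).prodMap (f.restrict hq) (x, y)) = f ↑x + f ↑y := by
      rw [LinearMap.prodMap_apply]
      rw [show e = Submodule.prodEquivOfIsCompl p q hpq from rfl]
      rw [Submodule.coe_prodEquivOfIsCompl']
      simp [LinearMap.restrict_coe_apply]
    rw [h1]
    have h2 : (e (x, y) : V) = ↑x + ↑y := Submodule.coe_prodEquivOfIsCompl' p q hpq (x, y)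
    rw [h2, map_add]
  have hconj := LinearMap.det_conj f e.symm
  rw [LinearEquiv.symm_symm] at hconj
  rw [← hconj, key, det_prodMap]

private lemma main_aux : ∀ (n : ℕ) (V : Type) [AddCommGroup V] [Module ℂ V]
    [FiniteDimensional ℂ V], Module.finrank ℂ V ≤ n → ∀ [Nontrivial V],
    ∀ (d : ℕ) (B : Fin d → Module.End ℂ V),
    (∀ i j, Commute (B i) (B j)) →
    (∀ α : Fin d → ℂ, LinearMap.det (∑ j, α j • B j) = 0) →
    ∃ v : V, v ≠ 0 ∧ ∀ j, B j v = 0 := by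
  intro n
  induction n with
  | zero =>
    intro V _ _ _ hr _ d B _ _
    have := Module.finrank_pos (R := ℂ) (M := V)
    omega
  | succ n ih =>
    intro V _ _ _ hr _ d B hcomm hdet
    by_cases hnil : ∀ j, IsNilpotent (B j)
    · exact nil_aux d V B hcomm hnil
    · push_neg at hnil
      obtain ⟨k, hk⟩ := hnil
      obtain ⟨m, hm1, hcompl⟩ : ∃ m, 1 ≤ m ∧
          IsCompl (LinearMap.ker ((B k) ^ m)) (LinearMap.range ((B k) ^ m)) := by
        obtain ⟨m₀, hm₀⟩ := Filter.eventually_atTop.mp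
          (LinearMap.eventually_isCompl_ker_pow_range_pow (B k))
        exact ⟨max m₀ 1, le_max_right _ _, hm₀ _ (le_max_left _ _)⟩
      set p := LinearMap.ker ((B k) ^ m) with hpdef
      set q := LinearMap.range ((B k) ^ m) with hqdef
      have hdetk : LinearMap.det (B k) = 0 := by
        have h := hdet (Pi.single k 1 : Fin d → ℂ)
        have hs : (∑ j, (Pi.single k 1 : Fin d → ℂ) j • B j) = B k := by
          rw [Finset.sum_eq_single k]
          · simp
          · intro j _ hj; simp [Pi.single_eq_of_ne hj]
          · simp
        rwa [hs] at h
      have hp_ne : p ≠ ⊥ := by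
        intro hbot
        have h1 : ⊥ < LinearMap.ker (B k) := LinearMap.bot_lt_ker_of_det_eq_zero hdetk
        have h2 : LinearMap.ker (B k) ≤ p := by
          obtain ⟨m', rfl⟩ := Nat.exists_eq_add_of_le hm1
          rw [hpdef, add_comm, pow_succ, Module.End.mul_eq_comp]
          exact LinearMap.ker_le_ker_comp _ _
        rw [hbot, le_bot_iff] at h2
        exact absurd h2 (ne_of_gt h1)
      have hq_ne : q ≠ ⊥ := fun hbot => hk ⟨m, LinearMap.range_eq_bot.mp hbot⟩
      have hmapp : ∀ j, ∀ x ∈ p, B j x ∈ p := by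
        intro j x hx
        simp only [hpdef, LinearMap.mem_ker] at hx ⊢
        have hc : Commute ((B k) ^ m) (B j) := (hcomm k j).pow_left m
        have := congrArg (fun f : Module.End ℂ V => f x) hc.eq
        simpa [Module.End.mul_apply, hx] using this
      have hmapq : ∀ j, ∀ x ∈ q, B j x ∈ q := by
        intro j x hx
        simp only [hqdef, LinearMap.mem_range] at hx ⊢
        obtain ⟨y, rfl⟩ := hx
        have hc : Commute ((B k) ^ m) (B j) := (hcomm k j).pow_left m
        have := congrArg (fun f : Module.End ℂ V => f y) hc.eq
        exact ⟨B j y, by simpa [Module.End.mul_apply] using this⟩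
      set Bp : Fin d → Module.End ℂ p := fun j => (B j).restrict (hmapp j) with hBp
      set Bq : Fin d → Module.End ℂ q := fun j => (B j).restrict (hmapq j) with hBq
      have hmem_p : ∀ (α : Fin d → ℂ), ∀ x ∈ p, (∑ j, α j • B j) x ∈ p := by
        intro α x hx
        rw [LinearMap.sum_apply]
        refine Submodule.sum_mem p fun j _ => ?_
        rw [LinearMap.smul_apply]
        exact Submodule.smul_mem p _ (hmapp j x hx)
      have hmem_q : ∀ (α : Fin d → ℂ), ∀ x ∈ q, (∑ j, α j • B j) x ∈ q := by
        intro α x hx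
        rw [LinearMap.sum_apply]
        refine Submodule.sum_mem q fun j _ => ?_
        rw [LinearMap.smul_apply]
        exact Submodule.smul_mem q _ (hmapq j x hx)
      have hsump : ∀ α : Fin d → ℂ,
          (∑ j, α j • B j).restrict (hmem_p α) = ∑ j, α j • Bp j := by
        intro α
        apply LinearMap.ext; intro x; apply Subtype.ext
        rw [LinearMap.restrict_coe_apply]
        simp [LinearMap.sum_apply, LinearMap.smul_apply, hBp, LinearMap.restrict_coe_apply]
      have hsumq : ∀ α : Fin d → ℂ,
          (∑ j, α j • B j).restrict (hmem_q α) = ∑ j, α j • Bq j := by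
        intro α
        apply LinearMap.ext; intro x; apply Subtype.ext
        rw [LinearMap.restrict_coe_apply]
        simp [LinearMap.sum_apply, LinearMap.smul_apply, hBq, LinearMap.restrict_coe_apply]
      obtain ⟨pp, hpp⟩ := exists_detPoly d p Bp
      obtain ⟨pq, hpq'⟩ := exists_detPoly d q Bq
      have hmul : pp * pq = 0 := by
        apply MvPolynomial.funext
        intro α
        have hdr := det_restrict V p q hcompl (∑ j, α j • B j) (hmem_p α) (hmem_q α)
        rw [hsump α, hsumq α] at hdr
        rw [_root_.map_mul, hpp, hpq', _root_.map_zero, ← hdr]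
        exact hdet α
      have hrk : Module.finrank ℂ p + Module.finrank ℂ q = Module.finrank ℂ V :=
        Submodule.finrank_add_eq_of_isCompl hcompl
      haveI hpnt : Nontrivial p := Submodule.nontrivial_iff_ne_bot.mpr hp_ne
      haveI hqnt : Nontrivial q := Submodule.nontrivial_iff_ne_bot.mpr hq_ne
      have hppos : 0 < Module.finrank ℂ p := Module.finrank_pos
      have hqpos : 0 < Module.finrank ℂ q := Module.finrank_pos
      have hBpcomm : ∀ i j, Commute (Bp i) (Bp j) := fun i j =>
        LinearMap.restrict_commute (hcomm i j) _ _
      have hBqcomm : ∀ i j, Commute (Bq i) (Bq j) := fun i j =>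
        LinearMap.restrict_commute (hcomm i j) _ _
      rcases mul_eq_zero.mp hmul with h | h
      · have hple : Module.finrank ℂ p ≤ n := by omega
        obtain ⟨v, hv0, hvB⟩ := ih p hple d Bp hBpcomm
          (fun α => by rw [← hpp, h, map_zero])
        refine ⟨v.1, by simpa using hv0, fun j => ?_⟩
        have := congrArg Subtype.val (hvB j)
        simpa [hBp, LinearMap.restrict_coe_apply] using this
      · have hqle : Module.finrank ℂ q ≤ n := by omega
        obtain ⟨v, hv0, hvB⟩ := ih q hqle d Bq hBqcomm
          (fun α => by rw [← hpq', h, map_zero])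
        refine ⟨v.1, by simpa using hv0, fun j => ?_⟩
        have := congrArg Subtype.val (hvB j)
        simpa [hBq, LinearMap.restrict_coe_apply] using this

/-- A point `λ` is a joint eigenvalue of the commuting matrix tuple
`(A₁,…,A_d)` iff `det (∑ⱼ αⱼ (Aⱼ - λⱼ I)) = 0` for all `α ∈ ℂᵈ`. -/
theorem stmt_4 (d N : ℕ)
    (A : Fin d → Matrix (Fin N) (Fin N) ℂ)
    (hcomm : ∀ i j, Commute (A i) (A j))
    (lam : Fin d → ℂ) :
    (∃ v : Fin N → ℂ, v ≠ 0 ∧ ∀ j, A j *ᵥ v = lam j • v) ↔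
      (∀ α : Fin d → ℂ,
        (∑ j, α j • (A j - lam j • (1 : Matrix (Fin N) (Fin N) ℂ))).det = 0) := by
  have key : ∀ (M : Matrix (Fin N) (Fin N) ℂ) (v : Fin N → ℂ),
      Matrix.toLin' M v = M *ᵥ v := fun M v => Matrix.toLin'_apply M v
  constructor
  · rintro ⟨v, hv, hev⟩ α
    rw [← Matrix.exists_mulVec_eq_zero_iff]
    refine ⟨v, hv, ?_⟩
    rw [← key, map_sum, LinearMap.sum_apply]
    have hz : ∀ j ∈ Finset.univ, (Matrix.toLin'
        (α j • (A j - lam j • (1 : Matrix (Fin N) (Fin N) ℂ)))) v = 0 := by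
      intro j _
      rw [_root_.map_smul, LinearMap.smul_apply, key, Matrix.sub_mulVec, hev j,
        Matrix.smul_mulVec, Matrix.one_mulVec, sub_self, smul_zero]
    rw [Finset.sum_congr rfl hz]
    simp
  · intro h
    rcases Nat.eq_zero_or_pos N with hN | hN
    · exfalso
      subst hN
      have := h 0
      simp [Matrix.det_isEmpty] at this
    · haveI : NeZero N := ⟨hN.ne'⟩
      set B : Fin d → Module.End ℂ (Fin N → ℂ) :=
        fun j => Matrix.toLin' (A j - lam j • (1 : Matrix (Fin N) (Fin N) ℂ)) with hB
      have hBcomm : ∀ i j, Commute (B i) (B j) := by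
        intro i j
        have c1 : Commute (A i) (A j - lam j • (1 : Matrix (Fin N) (Fin N) ℂ)) :=
          (hcomm i j).sub_right ((Commute.one_right (A i)).smul_right (lam j))
        have c2 : Commute (lam i • (1 : Matrix (Fin N) (Fin N) ℂ))
            (A j - lam j • (1 : Matrix (Fin N) (Fin N) ℂ)) :=
          (((Commute.one_left (A j)).sub_right
            ((Commute.refl (1 : Matrix (Fin N) (Fin N) ℂ)).smul_right (lam j))).smul_left (lam i))
        have hM := c1.sub_left c2
        show B i * B j = B j * B i
        rw [hB]
        simp only
        rw [Module.End.mul_eq_comp, Module.End.mul_eq_comp, ← Matrix.toLin'_mul,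
          ← Matrix.toLin'_mul, hM.eq]
      have hBdet : ∀ α : Fin d → ℂ, LinearMap.det (∑ j, α j • B j) = 0 := by
        intro α
        have hsum : Matrix.toLin' (∑ j, α j • (A j - lam j • (1 : Matrix (Fin N) (Fin N) ℂ)))
            = ∑ j, α j • B j := by
          rw [map_sum]
          exact Finset.sum_congr rfl fun j _ => _root_.map_smul _ _ _
        rw [← hsum, LinearMap.det_toLin']
        exact h α
      obtain ⟨v, hv0, hvB⟩ := main_aux (Module.finrank ℂ (Fin N → ℂ)) (Fin N → ℂ)
        le_rfl d B hBcomm hBdet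
      refine ⟨v, hv0, fun j => ?_⟩
      have hj := hvB j
      rw [hB] at hj
      simp only at hj
      rw [key, Matrix.sub_mulVec, Matrix.smul_mulVec, Matrix.one_mulVec] at hj
      exact sub_eq_zero.mp hj
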